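/- arXiv:2008.06418 — 2 statements merged into one kernel-verified Lean document; each statement's English description precedes it below -/
import Mathlib

section
/- Third adjacent-pair basis identity (Appendix C, eq. (C.2), third line): let V be a real vector space with quadratic form Q, let i, m be integers with 2 ≤ i < m, and let p₃, p₄, …, p_{2m} ∈ V all be null. Then Q(∑_{a=2i}^{2m} p_a) = −Q(∑_{a=3}^{2i} p_a) + Q(∑_{a=3}^{2m} p_a) + (2i−3)·∑_{k=i+1}^{m} Q(p_{2k−1} + p_{2k}) − ∑_{j=3}^{2i−1} ∑_{k=i+1}^{m} Q(p_j + p_{2k−1} + p_{2k}). In planar-variable notation: X_{2i,2m+1} = −X_{3,2i+1} + X_{3,2m+1} + (2i−3)∑_{k=i+1}^{m} X_{2k−1,2k+1} + ∑_{j=3}^{2i−1}∑_{k=i+1}^{m} c_{j,2k−1,2k}. -/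
open Finset QuadraticMap

private lemma polar_sum_left' {V : Type*} [AddCommGroup V] [Module ℝ V]
    (Q : QuadraticForm ℝ V) (s : Finset ℕ) (v : ℕ → V) (y : V) :
    polar Q (∑ a ∈ s, v a) y = ∑ a ∈ s, polar Q (v a) y := by
  induction s using Finset.cons_induction with
  | empty => simp [polar_zero_left]
  | cons a s ha ih => rw [Finset.sum_cons, Finset.sum_cons, polar_add_left, ih]

/-- Third adjacent-pair basis identity (Appendix C, eq. (C.2), third line):
for `2 ≤ i < m` and `p 3, …, p (2m)` null,
`Q(∑_{a=2i}^{2m} p a) = −Q(∑_{a=3}^{2i} p a) + Q(∑_{a=3}^{2m} p a)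
  + (2i−3)·∑_{k=i+1}^{m} Q(p_{2k-1} + p_{2k})
  − ∑_{j=3}^{2i-1} ∑_{k=i+1}^{m} Q(p_j + p_{2k-1} + p_{2k})`. -/
theorem adjacent_pair_basis_third (V : Type*) [AddCommGroup V] [Module ℝ V]
    (Q : QuadraticForm ℝ V) (i m : ℕ) (hi : 2 ≤ i) (him : i < m)
    (p : ℕ → V) (hnull : ∀ a ∈ Finset.Icc 3 (2 * m), Q (p a) = 0) :
    Q (∑ a ∈ Finset.Icc (2 * i) (2 * m), p a)
      = -Q (∑ a ∈ Finset.Icc 3 (2 * i), p a) + Q (∑ a ∈ Finset.Icc 3 (2 * m), p a)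
        + (2 * (i : ℝ) - 3) * ∑ k ∈ Finset.Icc (i + 1) m, Q (p (2 * k - 1) + p (2 * k))
        - ∑ j ∈ Finset.Icc 3 (2 * i - 1), ∑ k ∈ Finset.Icc (i + 1) m,
            Q (p j + p (2 * k - 1) + p (2 * k)) := by
  have hcard : ((2 * i - 1 + 1 - 3 : ℕ) : ℝ) = 2 * (i : ℝ) - 3 := by
    have h : (2 * i - 1 + 1 - 3 : ℕ) = 2 * i - 3 := by omega
    rw [h]
    push_cast [show (3:ℕ) ≤ 2 * i by omega]
    ring
  induction m, him using Nat.le_induction with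
  | base =>
    -- m = i + 1
    have e1 : 2 * (i + 1) = 2 * i + 1 + 1 := by omega
    have e2 : 2 * (i + 1) - 1 = 2 * i + 1 := by omega
    have e3 : 2 * i + 1 + 1 - 1 = 2 * i + 1 := by omega
    simp only [Finset.Icc_self, Finset.sum_singleton, e2, e1, e3]
    rw [Finset.sum_Icc_succ_top (by omega : 2 * i ≤ 2 * i + 1 + 1),
      Finset.sum_Icc_succ_top (by omega : 2 * i ≤ 2 * i + 1),
      Finset.Icc_self, Finset.sum_singleton,
      Finset.sum_Icc_succ_top (by omega : (3:ℕ) ≤ 2 * i + 1 + 1),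
      Finset.sum_Icc_succ_top (by omega : (3:ℕ) ≤ 2 * i + 1)]
    set y := p (2 * i + 1) with hy
    set z := p (2 * i + 1 + 1) with hz
    have key : ∀ u : V, Q (u + y + z) = Q u + polar Q u (y + z) + Q (y + z) := by
      intro u
      rw [add_assoc, QuadraticMap.map_add (⇑Q) u (y + z)]
      ring
    rw [key (p (2 * i)), key (∑ a ∈ Finset.Icc 3 (2 * i), p a)]
    have hQjsum : ∀ j ∈ Finset.Icc 3 (2 * i - 1), Q (p j + y + z) =
        polar Q (p j) (y + z) + Q (y + z) := fun j hj => by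
      simp only [Finset.mem_Icc] at hj
      rw [key (p j), hnull j (by simp; omega), zero_add]
    rw [Finset.sum_congr rfl hQjsum, Finset.sum_add_distrib, ← polar_sum_left',
      Finset.sum_const, Nat.card_Icc, nsmul_eq_mul, hcard]
    have hQx : Q (p (2 * i)) = 0 := hnull _ (by simp; omega)
    have hCx : (∑ a ∈ Finset.Icc 3 (2 * i), p a)
        = (∑ a ∈ Finset.Icc 3 (2 * i - 1), p a) + p (2 * i) := by
      rw [show (2:ℕ) * i = (2 * i - 1) + 1 by omega,
        Finset.sum_Icc_succ_top (by omega : (3:ℕ) ≤ 2 * i - 1 + 1)]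
      simp
    have hpolarC : polar Q (∑ a ∈ Finset.Icc 3 (2 * i), p a) (y + z) =
        polar Q (∑ a ∈ Finset.Icc 3 (2 * i - 1), p a) (y + z)
          + polar Q (p (2 * i)) (y + z) := by
      rw [hCx, polar_add_left]
    rw [hpolarC, hQx]
    ring
  | succ M hM ih =>
    have hsub : Finset.Icc 3 (2 * M) ⊆ Finset.Icc 3 (2 * (M + 1)) := by
      apply Finset.Icc_subset_Icc_right; omega
    have ih' := ih (fun a ha => hnull a (hsub ha))
    have e1 : 2 * (M + 1) = 2 * M + 1 + 1 := by omega
    have e2 : 2 * (M + 1) - 1 = 2 * M + 1 := by omega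
    set y := p (2 * M + 1) with hy
    set z := p (2 * M + 1 + 1) with hz
    have key : ∀ u : V, Q (u + y + z) = Q u + polar Q u (y + z) + Q (y + z) := by
      intro u
      rw [add_assoc, QuadraticMap.map_add (⇑Q) u (y + z)]
      ring
    rw [e1]
    rw [Finset.sum_Icc_succ_top (by omega : 2 * i ≤ 2 * M + 1 + 1),
      Finset.sum_Icc_succ_top (by omega : 2 * i ≤ 2 * M + 1),
      Finset.sum_Icc_succ_top (by omega : (3:ℕ) ≤ 2 * M + 1 + 1),
      Finset.sum_Icc_succ_top (by omega : (3:ℕ) ≤ 2 * M + 1)]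
    rw [Finset.sum_Icc_succ_top (by omega : i + 1 ≤ M + 1)]
    have hk : ∀ j : ℕ, (∑ k ∈ Finset.Icc (i + 1) (M + 1),
        Q (p j + p (2 * k - 1) + p (2 * k))) =
        (∑ k ∈ Finset.Icc (i + 1) M, Q (p j + p (2 * k - 1) + p (2 * k)))
          + Q (p j + y + z) := by
      intro j
      rw [Finset.sum_Icc_succ_top (by omega : i + 1 ≤ M + 1), e2, e1, hy, hz]
    simp only [hk]
    rw [e2, show (2:ℕ) * (M+1) = 2 * M + 1 + 1 from e1]
    rw [← hy, ← hz]
    rw [key (∑ a ∈ Finset.Icc (2 * i) (2 * M), p a),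
      key (∑ a ∈ Finset.Icc 3 (2 * M), p a), ih']
    simp only [Finset.sum_add_distrib]
    have hDsplit : (Finset.Icc 3 (2 * M) : Finset ℕ) =
        Finset.Icc 3 (2 * i - 1) ∪ Finset.Icc (2 * i) (2 * M) := by
      ext a
      simp only [Finset.mem_Icc, Finset.mem_union]
      omega
    have hdisj : Disjoint (Finset.Icc 3 (2 * i - 1)) (Finset.Icc (2 * i) (2 * M)) := by
      rw [Finset.disjoint_left]
      intro a ha hb
      simp only [Finset.mem_Icc] at ha hb
      omega
    have hpolarD : polar Q (∑ a ∈ Finset.Icc 3 (2 * M), p a) (y + z) =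
        polar Q (∑ a ∈ Finset.Icc 3 (2 * i - 1), p a) (y + z)
          + polar Q (∑ a ∈ Finset.Icc (2 * i) (2 * M), p a) (y + z) := by
      rw [hDsplit, Finset.sum_union hdisj, polar_add_left]
    have hQjsum : ∀ j ∈ Finset.Icc 3 (2 * i - 1), Q (p j + y + z) =
        polar Q (p j) (y + z) + Q (y + z) := fun j hj => by
      simp only [Finset.mem_Icc] at hj
      rw [key (p j), hnull j (by simp; omega), zero_add]
    rw [Finset.sum_congr rfl hQjsum, Finset.sum_add_distrib, ← polar_sum_left',
      Finset.sum_const, Nat.card_Icc, nsmul_eq_mul, hcard, hpolarD]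
    ring
end

section
/- Fourth adjacent-pair basis identity (Appendix C, eq. (C.2), fourth line, with summation range k = m+1, …, r): let V be a real vector space with quadratic form Q, let r ≥ 3 and n = 2r, let p₁, …, p_n ∈ V all be null with total momentum zero (∑_{a=1}^{n} p_a = 0), and let m be an integer with 2 ≤ m ≤ r−1. Then Q(∑_{a=2}^{2m} p_a) = −Q(p₁ + p₂) + Q(∑_{a=3}^{2m} p_a) + ∑_{k=m+1}^{r} Q(p_{2k−1} + p_{2k}) − ∑_{k=m+1}^{r} Q(p₂ + p_{2k−1} + p_{2k}). In planar-variable notation: X_{2,2m+1} = −X_{1,3} + X_{3,2m+1} + ∑_{k=m+1}^{n/2} X_{2k−1,2k+1} + ∑_{k=m+1}^{n/2} c_{2,2k−1,2k}. -/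
open Finset QuadraticMap

private lemma pair_sum {V : Type*} [AddCommGroup V] (f : ℕ → V) (m : ℕ) :
    ∀ r, m ≤ r → ∑ a ∈ Finset.Icc (2 * m + 1) (2 * r), f a
      = ∑ k ∈ Finset.Icc (m + 1) r, (f (2 * k - 1) + f (2 * k)) := by
  intro r
  induction r with
  | zero => intro h; interval_cases m; simp
  | succ r ih =>
    intro h
    rcases Nat.eq_or_lt_of_le h with h' | h'
    · subst h'; simp [Finset.Icc_eq_empty_of_lt]
    · have hmr : m ≤ r := Nat.lt_succ_iff.mp h'
      have h1 : 2 * m + 1 ≤ 2 * r + 1 := by omega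
      have h2 : 2 * m + 1 ≤ 2 * r + 1 + 1 := by omega
      have e1 : 2 * (r + 1) = (2 * r + 1) + 1 := by ring
      rw [e1, Finset.sum_Icc_succ_top h2, Finset.sum_Icc_succ_top h1,
        Finset.sum_Icc_succ_top (Nat.succ_le_succ hmr), ih hmr]
      have : 2 * (r + 1) - 1 = 2 * r + 1 := by omega
      rw [this, e1]
      abel

private lemma polar_sum_right' {V : Type*} [AddCommGroup V] [Module ℝ V]
    (Q : QuadraticForm ℝ V) (x : V) (s : Finset ℕ) (f : ℕ → V) :
    polar Q x (∑ a ∈ s, f a) = ∑ a ∈ s, polar Q x (f a) := by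
  classical
  induction s using Finset.induction with
  | empty => simp [polar_zero_right]
  | insert _ _ h ih =>
    rw [Finset.sum_insert h, Finset.sum_insert h, polar_add_right, ih]

/-- Fourth adjacent-pair basis identity (Appendix C, eq. (C.2), fourth line):
for `r ≥ 3`, `n = 2r`, momenta `p 1, …, p n` null with vanishing total momentum,
and `2 ≤ m ≤ r − 1`,
`Q(∑_{a=2}^{2m} p a) = −Q(p 1 + p 2) + Q(∑_{a=3}^{2m} p a)
  + ∑_{k=m+1}^{r} Q(p_{2k-1} + p_{2k}) − ∑_{k=m+1}^{r} Q(p 2 + p_{2k-1} + p_{2k})`. -/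
theorem adjacent_pair_basis_fourth (V : Type*) [AddCommGroup V] [Module ℝ V]
    (Q : QuadraticForm ℝ V) (r : ℕ) (hr : 3 ≤ r)
    (p : ℕ → V) (hnull : ∀ a ∈ Finset.Icc 1 (2 * r), Q (p a) = 0)
    (hmom : ∑ a ∈ Finset.Icc 1 (2 * r), p a = 0)
    (m : ℕ) (hm : 2 ≤ m) (hmr : m ≤ r - 1) :
    Q (∑ a ∈ Finset.Icc 2 (2 * m), p a)
      = -Q (p 1 + p 2) + Q (∑ a ∈ Finset.Icc 3 (2 * m), p a)
        + ∑ k ∈ Finset.Icc (m + 1) r, Q (p (2 * k - 1) + p (2 * k))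
        - ∑ k ∈ Finset.Icc (m + 1) r, Q (p 2 + p (2 * k - 1) + p (2 * k)) := by
  have hmr' : m + 1 ≤ r := by omega
  have hq1 : Q (p 1) = 0 := hnull 1 (by simp; omega)
  have hq2 : Q (p 2) = 0 := hnull 2 (by simp; omega)
  have expand : ∀ x y : V, Q (x + y) = Q x + Q y + polar Q x y := by
    intro x y; simp only [polar]; ring
  set S := ∑ a ∈ Finset.Icc 3 (2 * m), p a with hS
  set T := ∑ a ∈ Finset.Icc (2 * m + 1) (2 * r), p a with hT
  -- split momentum conservation
  have hsplit : p 1 + p 2 + S + T = 0 := by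
    rw [← hmom]
    have e0 : Finset.Icc 1 (2 * r) = Finset.Ioc 0 (2 * r) := by
      rw [← Finset.Icc_add_one_left_eq_Ioc]; rfl
    have e1 : Finset.Icc 3 (2 * m) = Finset.Ioc 2 (2 * m) := by
      rw [← Finset.Icc_add_one_left_eq_Ioc]; rfl
    have e2 : Finset.Icc (2 * m + 1) (2 * r) = Finset.Ioc (2 * m) (2 * r) := by
      rw [← Finset.Icc_add_one_left_eq_Ioc]
    rw [hS, hT, e0, e1, e2,
      ← Finset.sum_Ioc_consecutive p (by omega : (0:ℕ) ≤ 2) (by omega : 2 ≤ 2 * r),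
      ← Finset.sum_Ioc_consecutive p (by omega : (2:ℕ) ≤ 2 * m) (by omega : 2 * m ≤ 2 * r)]
    have : Finset.Ioc 0 2 = ({1, 2} : Finset ℕ) := by decide
    rw [this]
    simp
    abel
  -- T as paired sum
  have hTpair : T = ∑ k ∈ Finset.Icc (m + 1) r, (p (2 * k - 1) + p (2 * k)) := by
    rw [hT, pair_sum p m r (by omega)]
  -- LHS split
  have hlhs : ∑ a ∈ Finset.Icc 2 (2 * m), p a = p 2 + S := by
    rw [hS, ← Finset.insert_Icc_add_one_left_eq_Icc (show 2 ≤ 2 * m by omega),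
      Finset.sum_insert (by simp)]; rfl
  -- expand the troublesome sum
  have hsum2 : ∑ k ∈ Finset.Icc (m + 1) r, Q (p 2 + p (2 * k - 1) + p (2 * k))
      = (∑ k ∈ Finset.Icc (m + 1) r, Q (p (2 * k - 1) + p (2 * k)))
        + ∑ k ∈ Finset.Icc (m + 1) r, polar Q (p 2) (p (2 * k - 1) + p (2 * k)) := by
    rw [← Finset.sum_add_distrib]
    refine Finset.sum_congr rfl fun k hk => ?_
    rw [add_assoc, expand, hq2]
    ring
  have hTval : T = -(p 1 + p 2 + S) := by
    have := hsplit; linear_combination (norm := abel) this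
  have hpolarT : polar Q (p 2) T = -polar Q (p 1) (p 2) - polar Q (p 2) S := by
    rw [hTval, polar_neg_right, polar_add_right, polar_add_right, polar_self,
      polar_comm Q (p 2) (p 1), hq2]
    simp only [smul_zero]
    abel
  have hsumpolar : ∑ k ∈ Finset.Icc (m + 1) r, polar Q (p 2) (p (2 * k - 1) + p (2 * k))
      = polar Q (p 2) T := by
    rw [hTpair, polar_sum_right']
  rw [hlhs, expand, hq2, hsum2, hsumpolar, hpolarT, expand (p 1) (p 2), hq1, hq2]
  ring
end
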